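/- Let X be a real-valued random variable with E[(X - E X)^2] = σ² and E[(X - E X)^4] ≤ C₄ · (E[(X - E X)^2])² for some C₄ > 0. Let ε ≤ 1/2 and let A be any event with P(A) = 1 - ε. Then |E[X | A] - E[X]| ≤ (8 C₄ ε³)^{1/4} · σ. -/

import Mathlib

open MeasureTheory ProbabilityTheory

lemma cs_aux {Ω : Type*} [MeasurableSpace Ω] (ν : Measure Ω) [IsFiniteMeasure ν]
    (f : Ω → ℝ) (hf : Integrable f ν) (hf2 : Integrable (fun ω => f ω ^ 2) ν) :
    (∫ ω, f ω ∂ν) ^ 2 ≤ (ν Set.univ).toReal * ∫ ω, f ω ^ 2 ∂ν := by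
  set M := (ν Set.univ).toReal with hM
  set I := ∫ ω, f ω ∂ν with hI
  have hMnn : 0 ≤ M := ENNReal.toReal_nonneg
  rcases eq_or_lt_of_le hMnn with h0 | hMpos
  · have : ν = 0 := by
      have := (ENNReal.toReal_eq_zero_iff _).mp h0.symm
      rcases this with h | h
      · exact Measure.measure_univ_eq_zero.mp h
      · exact absurd h (measure_ne_top ν _)
    simp [hI, this]
  · have key : 0 ≤ ∫ ω, (M * f ω - I) ^ 2 ∂ν := integral_nonneg fun ω => sq_nonneg _
    have expand : ∫ ω, (M * f ω - I) ^ 2 ∂ν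
        = M ^ 2 * (∫ ω, f ω ^ 2 ∂ν) - 2 * M * I * I + I ^ 2 * M := by
      have h1 : (fun ω => (M * f ω - I) ^ 2)
          = fun ω => M ^ 2 * (f ω ^ 2) - (2 * M * I) * f ω + I ^ 2 := by
        funext ω; ring
      rw [h1, integral_add, integral_sub, integral_const_mul, integral_const_mul,
        integral_const, smul_eq_mul, mul_comm]
      · rw [measureReal_def, ← hM, ← hI]; ring_nf
      · exact hf2.const_mul _
      · exact hf.const_mul _
      · exact (hf2.const_mul _).sub (hf.const_mul _)
      · exact integrable_const _
    rw [expand] at key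
    nlinarith [key, hMpos]

/-- Fourth-power Hölder: (∫ f)⁴ ≤ (ν univ)³ ∫ f⁴. -/
lemma pow4_aux {Ω : Type*} [MeasurableSpace Ω] (ν : Measure Ω) [IsFiniteMeasure ν]
    (f : Ω → ℝ) (hf : Integrable f ν) (hf2 : Integrable (fun ω => f ω ^ 2) ν)
    (hf4 : Integrable (fun ω => f ω ^ 4) ν) :
    (∫ ω, f ω ∂ν) ^ 4 ≤ (ν Set.univ).toReal ^ 3 * ∫ ω, f ω ^ 4 ∂ν := by
  have h22 : Integrable (fun ω => (f ω ^ 2) ^ 2) ν := by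
    have : (fun ω => (f ω ^ 2) ^ 2) = fun ω => f ω ^ 4 := by funext ω; ring
    rw [this]; exact hf4
  have h1 := cs_aux ν f hf hf2
  have h2 := cs_aux ν (fun ω => f ω ^ 2) hf2 h22
  have h4eq : ∫ ω, (f ω ^ 2) ^ 2 ∂ν = ∫ ω, f ω ^ 4 ∂ν := by
    congr 1; funext ω; ring
  rw [h4eq] at h2
  have hMnn : 0 ≤ (ν Set.univ).toReal := ENNReal.toReal_nonneg
  have hI2nn : 0 ≤ ∫ ω, f ω ^ 2 ∂ν := integral_nonneg fun ω => sq_nonneg _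
  have hI4nn : 0 ≤ ∫ ω, f ω ^ 4 ∂ν := integral_nonneg fun ω => by positivity
  calc (∫ ω, f ω ∂ν) ^ 4 = ((∫ ω, f ω ∂ν) ^ 2) ^ 2 := by ring
    _ ≤ ((ν Set.univ).toReal * ∫ ω, f ω ^ 2 ∂ν) ^ 2 := by
        apply pow_le_pow_left₀ (sq_nonneg _) h1
    _ = (ν Set.univ).toReal ^ 2 * (∫ ω, f ω ^ 2 ∂ν) ^ 2 := by ring
    _ ≤ (ν Set.univ).toReal ^ 2 * ((ν Set.univ).toReal * ∫ ω, f ω ^ 4 ∂ν) := by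
        apply mul_le_mul_of_nonneg_left h2 (by positivity)
    _ = (ν Set.univ).toReal ^ 3 * ∫ ω, f ω ^ 4 ∂ν := by ring

/-- Let X be a real random variable with variance σ² and fourth central
moment bounded by C₄ times the square of the variance. Let A be an event with
P(A) = 1 - ε, 0 < ε ≤ 1/2. Then |E[X|A] - E[X]| ≤ (8 C₄ ε³)^{1/4} σ. -/
theorem mean_shift {Ω : Type*} [MeasurableSpace Ω] (μ : Measure Ω) [IsProbabilityMeasure μ]
    (X : Ω → ℝ) (σ C₄ ε : ℝ) (hC : 0 < C₄) (hσ : 0 ≤ σ)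
    (hX1 : Integrable X μ)
    (hX2 : Integrable (fun ω => (X ω - ∫ ω', X ω' ∂μ)^2) μ)
    (hX4 : Integrable (fun ω => (X ω - ∫ ω', X ω' ∂μ)^4) μ)
    (hvar : ∫ ω, (X ω - ∫ ω', X ω' ∂μ)^2 ∂μ = σ^2)
    (h4 : ∫ ω, (X ω - ∫ ω', X ω' ∂μ)^4 ∂μ
        ≤ C₄ * (∫ ω, (X ω - ∫ ω', X ω' ∂μ)^2 ∂μ)^2)
    (A : Set Ω) (hA : MeasurableSet A) (hε : 0 < ε) (hε2 : ε ≤ 1/2)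
    (hPA : μ A = ENNReal.ofReal (1 - ε)) :
    |(∫ ω, X ω ∂(μ[|A])) - ∫ ω, X ω ∂μ| ≤ (8 * C₄ * ε^3) ^ ((1:ℝ)/4) * σ := by
  set m := ∫ ω', X ω' ∂μ with hm
  set Y := fun ω => X ω - m with hY
  have hYint : Integrable Y μ := hX1.sub (integrable_const m)
  have hεle : ε ≤ 1 := hε2.trans (by norm_num)
  have hp : (μ A).toReal = 1 - ε := by
    rw [hPA, ENNReal.toReal_ofReal (by linarith)]
  set p := (1 : ℝ) - ε with hpdef
  have hppos : 0 < p := by simp [hpdef]; linarith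
  have hplt : p ≤ 1 := by simp [hpdef]; linarith
  -- measure of complement
  have hPAc : μ Aᶜ = ENNReal.ofReal ε := by
    have h1 : μ Aᶜ = 1 - μ A := prob_compl_eq_one_sub hA
    rw [h1, hPA]
    rw [← ENNReal.ofReal_one, ← ENNReal.ofReal_sub _ (by linarith)]
    congr 1
    rw [hpdef]; ring
  have hq : (μ Aᶜ).toReal = ε := by rw [hPAc, ENNReal.toReal_ofReal hε.le]
  -- integrals of Y over A and Aᶜ
  set a := ∫ ω in A, Y ω ∂μ with ha
  set b := ∫ ω in Aᶜ, Y ω ∂μ with hb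
  have hEY : ∫ ω, Y ω ∂μ = 0 := by
    rw [hY]
    rw [integral_sub hX1 (integrable_const m), integral_const, measureReal_def, measure_univ]
    simp [hm]
  have hab : a + b = 0 := by
    rw [ha, hb, integral_add_compl hA hYint]; exact hEY
  -- fourth moment
  have hC4 : ∫ ω, Y ω ^ 4 ∂μ ≤ C₄ * σ ^ 4 := by
    calc ∫ ω, Y ω ^ 4 ∂μ ≤ C₄ * (∫ ω, Y ω ^ 2 ∂μ) ^ 2 := h4
      _ = C₄ * σ ^ 4 := by rw [hvar]; ring
  have hY2A : Integrable (fun ω => Y ω ^ 2) (μ.restrict A) := hX2.restrict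
  have hY4A : Integrable (fun ω => Y ω ^ 4) (μ.restrict A) := hX4.restrict
  have hY2B : Integrable (fun ω => Y ω ^ 2) (μ.restrict Aᶜ) := hX2.restrict
  have hY4B : Integrable (fun ω => Y ω ^ 4) (μ.restrict Aᶜ) := hX4.restrict
  have hMA : ((μ.restrict A) Set.univ).toReal = p := by
    rw [Measure.restrict_apply_univ]; exact hp
  have hMB : ((μ.restrict Aᶜ) Set.univ).toReal = ε := by
    rw [Measure.restrict_apply_univ]; exact hq
  have hI4A := pow4_aux (μ.restrict A) Y hYint.restrict hY2A hY4A
  have hI4B := pow4_aux (μ.restrict Aᶜ) Y hYint.restrict hY2B hY4B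
  rw [hMA] at hI4A
  rw [hMB] at hI4B
  set J := ∫ ω in A, Y ω ^ 4 ∂μ with hJ
  set K := ∫ ω in Aᶜ, Y ω ^ 4 ∂μ with hK
  rw [← ha] at hI4A
  rw [← hb] at hI4B
  have hJnn : 0 ≤ J := integral_nonneg fun ω => by positivity
  have hKnn : 0 ≤ K := integral_nonneg fun ω => by positivity
  have hJK : J + K ≤ C₄ * σ ^ 4 := by
    rw [hJ, hK, integral_add_compl hA hX4]; exact hC4
  -- hI4A : a ^ 4 ≤ p ^ 3 * J ; hI4B : b ^ 4 ≤ ε ^ 3 * K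
  have hb4 : b = -a := by linarith
  have ha4B : a ^ 4 ≤ ε ^ 3 * K := by
    have : b ^ 4 = a ^ 4 := by rw [hb4]; ring
    linarith [hI4B, this]
  -- key polynomial inequality : 8 * p * (p^3 + ε^3) ≥ 1
  have hpoly : (1:ℝ) ≤ 8 * p * (p ^ 3 + ε ^ 3) := by
    rw [hpdef]
    nlinarith [sq_nonneg (2*ε - 1), sq_nonneg ε, hε.le, hε2, sq_nonneg (3*ε - 2)]
  have hCσnn : 0 ≤ C₄ * σ ^ 4 := by positivity
  -- a^4 * (p^3 + ε^3) ≤ p^3 * ε^3 * (C₄ σ⁴)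
  have hkey : a ^ 4 * (p ^ 3 + ε ^ 3) ≤ p ^ 3 * ε ^ 3 * (C₄ * σ ^ 4) := by
    have t1 : ε ^ 3 * a ^ 4 ≤ ε ^ 3 * (p ^ 3 * J) :=
      mul_le_mul_of_nonneg_left hI4A (pow_pos hε 3).le
    have t2 : p ^ 3 * a ^ 4 ≤ p ^ 3 * (ε ^ 3 * K) :=
      mul_le_mul_of_nonneg_left ha4B (pow_pos hppos 3).le
    have t3 : p ^ 3 * ε ^ 3 * (J + K) ≤ p ^ 3 * ε ^ 3 * (C₄ * σ ^ 4) :=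
      mul_le_mul_of_nonneg_left hJK (by positivity)
    nlinarith [t1, t2, t3]
  have ha4nn : 0 ≤ a ^ 4 := by positivity
  have hfinal : a ^ 4 ≤ 8 * C₄ * ε ^ 3 * σ ^ 4 * p ^ 4 := by
    have h1 : a ^ 4 * 1 ≤ a ^ 4 * (8 * p * (p ^ 3 + ε ^ 3)) :=
      mul_le_mul_of_nonneg_left hpoly ha4nn
    have h2 : a ^ 4 * (8 * p * (p ^ 3 + ε ^ 3)) = 8 * p * (a ^ 4 * (p ^ 3 + ε ^ 3)) := by ring
    have h3 : 8 * p * (a ^ 4 * (p ^ 3 + ε ^ 3)) ≤ 8 * p * (p ^ 3 * ε ^ 3 * (C₄ * σ ^ 4)) := by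
      apply mul_le_mul_of_nonneg_left hkey (by positivity)
    have h4' : 8 * p * (p ^ 3 * ε ^ 3 * (C₄ * σ ^ 4)) = 8 * C₄ * ε ^ 3 * σ ^ 4 * p ^ 4 := by
      ring
    rw [mul_one, h2] at h1
    rw [h4'] at h3
    linarith [h1, h3]
  -- identify the conditional expectation difference
  have hcond : ∫ ω, X ω ∂(μ[|A]) - m = a / p := by
    have h1 : ∫ ω, X ω ∂(μ[|A]) = ((μ A)⁻¹).toReal * ∫ ω in A, X ω ∂μ := by
      rw [ProbabilityTheory.cond, integral_smul_measure, smul_eq_mul]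
    have h2 : ∫ ω in A, X ω ∂μ = a + p * m := by
      have : ∫ ω in A, X ω ∂μ = ∫ ω in A, (Y ω + m) ∂μ := by
        congr 1; funext ω; simp [hY]
      rw [this, integral_add hYint.restrict (integrable_const m), integral_const,
        measureReal_def, Measure.restrict_apply_univ, hp, smul_eq_mul, ← ha]
    have h3 : ((μ A)⁻¹).toReal = p⁻¹ := by
      rw [ENNReal.toReal_inv, hp]
    rw [h1, h2, h3]
    field_simp
    ring
  rw [hcond]
  -- now |a / p| ≤ (8 C₄ ε³)^{1/4} σ
  have habs : |a / p| ^ (4:ℕ) ≤ 8 * C₄ * ε ^ 3 * σ ^ 4 := by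
    have : |a / p| ^ (4:ℕ) = (a / p) ^ 4 := by
      rw [← abs_pow]
      exact abs_of_nonneg (by positivity)
    rw [this, div_pow]
    rw [div_le_iff₀ (by positivity)]
    linarith [hfinal]
  have h8nn : (0:ℝ) ≤ 8 * C₄ * ε ^ 3 := by positivity
  have hrhs : ((8 * C₄ * ε ^ 3) ^ ((1:ℝ)/4) * σ) ^ (4:ℕ) = 8 * C₄ * ε ^ 3 * σ ^ 4 := by
    rw [mul_pow, ← Real.rpow_natCast ((8 * C₄ * ε ^ 3) ^ ((1:ℝ)/4)) 4,
      ← Real.rpow_mul h8nn]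
    norm_num
  have : |a / p| ≤ (8 * C₄ * ε ^ 3) ^ ((1:ℝ)/4) * σ := by
    have hrnn : (0:ℝ) ≤ (8 * C₄ * ε ^ 3) ^ ((1:ℝ)/4) * σ :=
      mul_nonneg (Real.rpow_nonneg h8nn _) hσ
    have := pow_le_pow_iff_left₀ (abs_nonneg (a/p)) hrnn (by norm_num : (4:ℕ) ≠ 0)
    rw [← this]
    rw [hrhs]
    exact habs
  exact this
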